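/- Serfling's bound for hypergeometric tails: let l = n + k with n, k ≥ 1, let 0 ≤ σ ≤ l, let μ > 0, and set d = ⌈n(σ/l + (k/l)μ)⌉. Then ∑_{j=d}^{n} C(σ, j)·C(l−σ, n−j)/C(l, n) ≤ exp(−2·(k n / l)·(k/(k+1))·μ²). -/

import Mathlib

open Finset

open Real in
/-- Hoeffding's two-point lemma. -/
theorem hoeff_lemma (p : ℝ) (hp0 : 0 ≤ p) (hp1 : p ≤ 1) (x : ℝ) :
    p * Real.exp x + (1 - p) ≤ Real.exp (p * x + x ^ 2 / 8) := by
  set q : ℝ := 1 - p with hq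
  have hq0 : 0 ≤ q := by simp [hq]; linarith
  set h : ℝ → ℝ := fun y => p * Real.exp (q * y) + q * Real.exp (-(p * y)) with hh
  have hpos : ∀ y, 0 < h y := by
    intro y
    rcases eq_or_lt_of_le hp0 with h0 | h0
    · have : q = 1 := by simp [hq, ← h0]
      simp [hh, ← h0, this, Real.exp_pos]
    · have : 0 < p * Real.exp (q * y) := by positivity
      have h2 : 0 ≤ q * Real.exp (-(p * y)) := by positivity
      simp [hh]; linarith
  set h' : ℝ → ℝ := fun y => p * q * Real.exp (q * y) - p * q * Real.exp (-(p * y)) with hh'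
  set h'' : ℝ → ℝ := fun y => p * q * (q * Real.exp (q * y)) + p * q * (p * Real.exp (-(p * y)))
    with hh''
  have dh : ∀ y, HasDerivAt h (h' y) y := by
    intro y
    have d1 : HasDerivAt (fun y : ℝ => Real.exp (q * y)) (Real.exp (q * y) * q) y := by
      simpa using ((hasDerivAt_id y).const_mul q).exp
    have d2 : HasDerivAt (fun y : ℝ => Real.exp (-(p * y))) (Real.exp (-(p * y)) * (-p)) y := by
      have := (((hasDerivAt_id y).const_mul p).neg).exp
      simpa using this
    have := (d1.const_mul p).add (d2.const_mul q)
    refine this.congr_deriv ?_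
    simp [hh']; ring
  have dh' : ∀ y, HasDerivAt h' (h'' y) y := by
    intro y
    have d1 : HasDerivAt (fun y : ℝ => Real.exp (q * y)) (Real.exp (q * y) * q) y := by
      simpa using ((hasDerivAt_id y).const_mul q).exp
    have d2 : HasDerivAt (fun y : ℝ => Real.exp (-(p * y))) (Real.exp (-(p * y)) * (-p)) y := by
      have := (((hasDerivAt_id y).const_mul p).neg).exp
      simpa using this
    have := (d1.const_mul (p * q)).sub (d2.const_mul (p * q))
    refine this.congr_deriv ?_
    simp [hh'']; ring
  set ψ : ℝ → ℝ := fun y => h' y / h y - y / 4 with hψ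
  have dψ : ∀ y, HasDerivAt ψ ((h'' y * h y - h' y * h' y) / (h y) ^ 2 - 1 / 4) y := by
    intro y
    have := ((dh' y).div (dh y) (ne_of_gt (hpos y))).sub ((hasDerivAt_id y).div_const 4)
    exact this
  have hψ'le : ∀ y, (h'' y * h y - h' y * h' y) / (h y) ^ 2 - 1 / 4 ≤ 0 := by
    intro y
    have h2 : (0:ℝ) < (h y) ^ 2 := pow_pos (hpos y) 2
    rw [sub_nonpos, div_le_iff₀ h2]
    have hA : 0 < Real.exp (q * y) := Real.exp_pos _
    have hB : 0 < Real.exp (-(p * y)) := Real.exp_pos _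
    set A := Real.exp (q * y)
    set B := Real.exp (-(p * y))
    have e1 : h y = p * A + q * B := rfl
    have e2 : h' y = p * q * A - p * q * B := rfl
    have e3 : h'' y = p * q * (q * A) + p * q * (p * B) := rfl
    rw [e1, e2, e3, hq]
    nlinarith [sq_nonneg (p * A - (1 - p) * B), mul_pos hA hB, mul_nonneg hp0 hq0,
      mul_nonneg (mul_nonneg hp0 hq0) (mul_pos hA hB).le]
  have ψanti : Antitone ψ := by
    apply antitone_of_deriv_nonpos
    · intro y; exact (dψ y).differentiableAt
    · intro y; rw [(dψ y).deriv]; exact hψ'le y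
  have ψ0 : ψ 0 = 0 := by simp [hψ, hh']
  set Φ : ℝ → ℝ := fun y => Real.log (h y) - y ^ 2 / 8 with hΦ
  have dΦ : ∀ y, HasDerivAt Φ (ψ y) y := by
    intro y
    have d1 : HasDerivAt (fun y => Real.log (h y)) (h' y / h y) y :=
      (dh y).log (ne_of_gt (hpos y))
    have d2 : HasDerivAt (fun y : ℝ => y ^ 2 / 8) (2 * y ^ 1 / 8) y :=
      (hasDerivAt_pow 2 y).div_const 8
    have := d1.sub d2
    refine this.congr_deriv ?_
    simp [hψ]; ring
  have Φ0 : Φ 0 = 0 := by simp [hΦ, hh, hq]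
  have key : ∀ y, Φ y ≤ 0 := by
    intro y
    rcases le_or_gt 0 y with hy | hy
    · have mono : AntitoneOn Φ (Set.Ici 0) := by
        apply antitoneOn_of_deriv_nonpos (convex_Ici 0)
        · exact fun z _ => (dΦ z).continuousAt.continuousWithinAt
        · exact fun z _ => (dΦ z).differentiableAt.differentiableWithinAt
        · intro z hz
          rw [(dΦ z).deriv]
          have : ψ z ≤ ψ 0 := ψanti (le_of_lt (by simpa using hz))
          linarith [ψ0 ▸ this]
      have := mono (Set.self_mem_Ici) hy hy
      linarith [Φ0 ▸ this]
    · have mono : MonotoneOn Φ (Set.Iic 0) := by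
        apply monotoneOn_of_deriv_nonneg (convex_Iic 0)
        · exact fun z _ => (dΦ z).continuousAt.continuousWithinAt
        · exact fun z _ => (dΦ z).differentiableAt.differentiableWithinAt
        · intro z hz
          rw [(dΦ z).deriv]
          have : ψ 0 ≤ ψ z := ψanti (le_of_lt (by simpa using hz))
          linarith [ψ0 ▸ this]
      have := mono (Set.mem_Iic.mpr hy.le) (Set.self_mem_Iic) hy.le
      linarith [Φ0 ▸ this]
  have hlog : Real.log (h x) ≤ x ^ 2 / 8 := by have := key x; simp [hΦ] at this; linarith
  have hx : h x ≤ Real.exp (x ^ 2 / 8) := (Real.log_le_iff_le_exp (hpos x)).mp hlog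
  have : Real.exp (p * x) * h x ≤ Real.exp (p * x) * Real.exp (x ^ 2 / 8) :=
    mul_le_mul_of_nonneg_left hx (Real.exp_pos _).le
  have A : Real.exp (p * x) * Real.exp (q * x) = Real.exp x := by
    rw [← Real.exp_add]; congr 1; rw [hq]; ring
  have B : Real.exp (p * x) * Real.exp (-(p * x)) = 1 := by
    rw [← Real.exp_add]; simp
  calc p * Real.exp x + (1 - p) = Real.exp (p * x) * h x := by
        simp only [hh]
        rw [← hq, mul_add]
        linear_combination (-p) * A + (-q) * B
      _ ≤ Real.exp (p * x) * Real.exp (x ^ 2 / 8) := this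
      _ = Real.exp (p * x + x ^ 2 / 8) := (Real.exp_add _ _).symm


noncomputable def serflingC (k n : ℕ) : ℝ := ∑ i ∈ Finset.range n, ((k : ℝ) / (k + i)) ^ 2

lemma serflingC_succ (k n : ℕ) :
    serflingC k (n + 1) = serflingC k n + ((k : ℝ) / (k + n)) ^ 2 := by
  simp [serflingC, Finset.sum_range_succ]

lemma serflingC_nonneg (k n : ℕ) : 0 ≤ serflingC k n :=
  Finset.sum_nonneg fun _ _ => sq_nonneg _

lemma choose_id_real (M m : ℕ) :
    ((m + 1 : ℕ) : ℝ) * (M.choose (m + 1) : ℝ) = (M : ℝ) * ((M - 1).choose m : ℝ) := by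
  rcases M with _ | M'
  · simp
  · have h2 : (m + 1) * (M' + 1).choose (m + 1) = (M' + 1) * M'.choose m := by
      rw [mul_comm]
      exact (Nat.add_one_mul_choose_eq M' m).symm
    simp only [Nat.add_sub_cancel]
    exact_mod_cast h2

set_option maxHeartbeats 1000000 in
lemma mgf_bound (k : ℕ) (hk : 1 ≤ k) :
    ∀ (n σ : ℕ), σ ≤ n + k → ∀ lam : ℝ,
    ∑ j ∈ Finset.range (n + 1),
        (σ.choose j : ℝ) * (((n + k - σ).choose (n - j) : ℕ) : ℝ) * Real.exp (lam * j)
      ≤ ((n + k).choose n : ℝ) *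
        Real.exp (lam * n * σ / (n + k) + lam ^ 2 * serflingC k n / 8) := by
  intro n
  induction n with
  | zero =>
    intro σ hσ lam
    simp [serflingC]
  | succ n ih =>
    intro σ hσ lam
    have hkR : (1:ℝ) ≤ (k:ℝ) := by exact_mod_cast hk
    have hnR : (0:ℝ) ≤ (n:ℝ) := Nat.cast_nonneg n
    have hnk : (0 : ℝ) < (n : ℝ) + k := by linarith
    have hnk' : ((n:ℝ) + k) ≠ 0 := ne_of_gt hnk
    have hlR : (0 : ℝ) < (n : ℝ) + 1 + k := by linarith
    have hlR' : ((n:ℝ) + 1 + k) ≠ 0 := ne_of_gt hlR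
    have hn1 : (0:ℝ) < ((n+1 : ℕ) : ℝ) := by positivity
    set c' : ℝ := serflingC k n with hc'
    clear_value c'
    set E : ℝ := Real.exp (lam * (↑(n+1)) * σ / (↑(n+1) + k) + lam ^ 2 * serflingC k (n + 1) / 8)
      with hE
    have hEpos : 0 < E := Real.exp_pos _
    show ∑ j ∈ Finset.range (n + 1 + 1),
        (σ.choose j : ℝ) * (((n + 1 + k - σ).choose (n + 1 - j) : ℕ) : ℝ) * Real.exp (lam * j)
        ≤ ((n + 1 + k).choose (n + 1) : ℝ) * E
    rcases Nat.eq_zero_or_pos σ with hσ0 | hσpos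
    · -- σ = 0 : sum collapses to the j = 0 term
      subst hσ0
      have hsum : ∑ j ∈ Finset.range (n + 1 + 1),
          ((0 : ℕ).choose j : ℝ) * (((n + 1 + k - 0).choose (n + 1 - j) : ℕ) : ℝ)
            * Real.exp (lam * j)
          = ((n + 1 + k).choose (n + 1) : ℝ) := by
        rw [Finset.sum_eq_single_of_mem 0 (Finset.mem_range.mpr (by omega))]
        · simp
        · intro j _ hj0
          rcases Nat.exists_eq_succ_of_ne_zero hj0 with ⟨m, rfl⟩
          simp [Nat.choose]
      rw [hsum]
      have h1 : (1:ℝ) ≤ E := by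
        rw [hE]
        apply Real.one_le_exp
        have h0 : lam * (↑(n+1) : ℝ) * ((0:ℕ) : ℝ) / ((↑(n+1) : ℝ) + k) = 0 := by simp
        rw [h0]
        have := serflingC_nonneg k (n+1)
        positivity
      exact le_mul_of_one_le_right (Nat.cast_nonneg _) h1
    · rcases Nat.lt_or_ge σ (n + 1 + k) with hσlt | hσge
      swap
      · -- σ = n + 1 + k : sum collapses to the j = n+1 term
        have hσeq : σ = n + 1 + k := le_antisymm hσ hσge
        subst hσeq
        have hsum : ∑ j ∈ Finset.range (n + 1 + 1),
            ((n+1+k).choose j : ℝ) * (((n + 1 + k - (n+1+k)).choose (n + 1 - j) : ℕ) : ℝ)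
              * Real.exp (lam * j)
            = ((n + 1 + k).choose (n + 1) : ℝ) * Real.exp (lam * (↑(n+1) : ℝ)) := by
          rw [Finset.sum_eq_single_of_mem (n+1) (Finset.mem_range.mpr (by omega))]
          · simp
          · intro j hj hjne
            have hj' : j < n + 1 := by
              have := Finset.mem_range.mp hj
              omega
            have h0 : n + 1 + k - (n+1+k) = 0 := by omega
            rw [h0]
            have h2 : (0 : ℕ).choose (n + 1 - j) = 0 := by
              rcases Nat.exists_eq_succ_of_ne_zero (by omega : n + 1 - j ≠ 0) with ⟨m, hm⟩
              rw [hm]; simp [Nat.choose]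
            rw [h2]; simp
        rw [hsum]
        apply mul_le_mul_of_nonneg_left _ (Nat.cast_nonneg _)
        apply Real.exp_le_exp.mpr
        have h0 : lam * (↑(n+1) : ℝ) * (↑(n+1+k) : ℝ) / ((↑(n+1) : ℝ) + ↑k) = lam * ↑(n+1) := by
          push_cast
          field_simp
        rw [h0]
        have := serflingC_nonneg k (n+1)
        nlinarith [sq_nonneg lam]
      · -- main case : 1 ≤ σ ≤ n + k
        obtain ⟨σ', rfl⟩ : ∃ σ', σ = σ' + 1 := ⟨σ - 1, by omega⟩
        have hσ'le : σ' ≤ n + k - 1 := by omega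
        set Cn : ℝ := ((n+k).choose n : ℝ) with hCn
        set S1 : ℝ := ∑ i ∈ Finset.range (n + 1),
            (σ'.choose i : ℝ) * (((n + k - σ').choose (n - i) : ℕ) : ℝ) * Real.exp (lam * i)
          with hS1
        set S2 : ℝ := ∑ j ∈ Finset.range (n + 1),
            ((σ'+1).choose j : ℝ) * (((n + k - (σ'+1)).choose (n - j) : ℕ) : ℝ)
              * Real.exp (lam * j) with hS2
        set A' : ℝ := lam * ↑n * ↑σ' / (↑n + ↑k) + lam ^ 2 * c' / 8 with hA'
        set A : ℝ := lam * ↑n * ↑(σ'+1) / (↑n + ↑k) + lam ^ 2 * c' / 8 with hA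
        have ihs1 : S1 ≤ Cn * Real.exp A' := ih σ' (by omega) lam
        have ihs2 : S2 ≤ Cn * Real.exp A := ih (σ'+1) (by omega) lam
        -- the splitting identity
        have hid : (↑(n+1) : ℝ) * ∑ j ∈ Finset.range (n + 1 + 1),
            ((σ'+1).choose j : ℝ) * (((n + 1 + k - (σ'+1)).choose (n + 1 - j) : ℕ) : ℝ)
              * Real.exp (lam * j)
            = ↑(σ'+1) * Real.exp lam * S1 + (↑(n + k - σ') : ℝ) * S2 := by
          rw [Finset.mul_sum]
          have hsplit : ∀ j ∈ Finset.range (n + 1 + 1),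
              (↑(n+1) : ℝ) * (((σ'+1).choose j : ℝ)
                  * (((n + 1 + k - (σ'+1)).choose (n + 1 - j) : ℕ) : ℝ) * Real.exp (lam * j))
              = (j : ℝ) * (((σ'+1).choose j : ℝ)
                  * (((n + 1 + k - (σ'+1)).choose (n + 1 - j) : ℕ) : ℝ) * Real.exp (lam * j))
              + ((n + 1 - j : ℕ) : ℝ) * (((σ'+1).choose j : ℝ)
                  * (((n + 1 + k - (σ'+1)).choose (n + 1 - j) : ℕ) : ℝ) * Real.exp (lam * j)) := by
            intro j hj
            have hj2 : j ≤ n + 1 := by have := Finset.mem_range.mp hj; omega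
            have hc : ((n + 1 - j : ℕ) : ℝ) = (↑(n+1) : ℝ) - j := by
              push_cast [Nat.cast_sub hj2]
              ring
            rw [hc]
            ring
          rw [Finset.sum_congr rfl hsplit, Finset.sum_add_distrib]
          congr 1
          · -- first piece : peel j = 0 and shift
            rw [Finset.sum_range_succ']
            have h00 : ((0:ℕ) : ℝ) * (((σ'+1).choose 0 : ℝ)
                * (((n + 1 + k - (σ'+1)).choose (n + 1 - 0) : ℕ) : ℝ) * Real.exp (lam * (0:ℕ))) = 0 := by
              simp
            rw [h00, add_zero, hS1, Finset.mul_sum]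
            apply Finset.sum_congr rfl
            intro i hi
            have hi' : i ≤ n := by have := Finset.mem_range.mp hi; omega
            have e1 : n + 1 + k - (σ'+1) = n + k - σ' := by omega
            have e2 : n + 1 - (i+1) = n - i := by omega
            rw [e1, e2]
            have e3 : Real.exp (lam * (↑(i+1) : ℝ)) = Real.exp lam * Real.exp (lam * i) := by
              rw [← Real.exp_add]
              congr 1
              push_cast
              ring
            rw [e3]
            have cid := choose_id_real (σ'+1) i
            simp only [Nat.add_sub_cancel] at cid
            linear_combination (((n + k - σ').choose (n - i) : ℕ) : ℝ)
              * (Real.exp lam * Real.exp (lam * i)) * cid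
          · -- second piece : peel j = n+1
            rw [Finset.sum_range_succ]
            have h00 : ((n + 1 - (n+1) : ℕ) : ℝ) * (((σ'+1).choose (n+1) : ℝ)
                * (((n + 1 + k - (σ'+1)).choose (n + 1 - (n+1)) : ℕ) : ℝ)
                * Real.exp (lam * (↑(n+1) : ℝ))) = 0 := by
              simp
            rw [h00, add_zero, hS2, Finset.mul_sum]
            apply Finset.sum_congr rfl
            intro j hj
            have hj' : j ≤ n := by have := Finset.mem_range.mp hj; omega
            have e1 : n + 1 + k - (σ'+1) = n + k - σ' := by omega
            have e2 : n + 1 - j = (n - j) + 1 := by omega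
            rw [e1, e2]
            have cid := choose_id_real (n + k - σ') (n - j)
            have e3 : n + k - σ' - 1 = n + k - (σ'+1) := by omega
            rw [e3] at cid
            linear_combination (((σ'+1).choose j : ℝ)) * Real.exp (lam * j) * cid
        -- apply the inductive bounds
        have step1 : (↑(σ'+1) : ℝ) * Real.exp lam * S1
            ≤ ↑(σ'+1) * Real.exp lam * (Cn * Real.exp A') := by
          apply mul_le_mul_of_nonneg_left ihs1
          positivity
        have step2 : (↑(n + k - σ') : ℝ) * S2 ≤ ↑(n + k - σ') * (Cn * Real.exp A) :=
          mul_le_mul_of_nonneg_left ihs2 (Nat.cast_nonneg _)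
        -- Hoeffding step
        set p : ℝ := ((σ' : ℝ) + 1) / ((n : ℝ) + 1 + k) with hp
        set x : ℝ := lam * k / ((n : ℝ) + k) with hx
        have hp0 : 0 ≤ p := by positivity
        have hp1 : p ≤ 1 := by
          rw [hp, div_le_one hlR]
          have : ((σ' + 1 : ℕ) : ℝ) ≤ ((n + 1 + k : ℕ) : ℝ) := Nat.cast_le.mpr (by omega)
          push_cast at this
          linarith
        have hoe := hoeff_lemma p hp0 hp1 x
        have hoe' : ((σ' : ℝ) + 1) * Real.exp x + (((n : ℝ) + k) - σ')
            ≤ ((n : ℝ) + 1 + k) * Real.exp (p * x + x ^ 2 / 8) := by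
          have h5 : ((n : ℝ) + 1 + k) * (p * Real.exp x + (1 - p))
              = ((σ' : ℝ) + 1) * Real.exp x + (((n : ℝ) + k) - σ') := by
            rw [hp]
            field_simp
            ring
          nlinarith [mul_le_mul_of_nonneg_left hoe (le_of_lt hlR)]
        -- key combination
        have hcast : ((n + k - σ' : ℕ) : ℝ) = (n : ℝ) + k - σ' := by
          rw [Nat.cast_sub (show σ' ≤ n + k by omega)]
          push_cast
          ring
        have hexp : Real.exp lam * Real.exp A' = Real.exp x * Real.exp A := by
          rw [← Real.exp_add, ← Real.exp_add, hA', hA, hx]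
          congr 1
          push_cast
          field_simp
          ring
        have key : (↑(σ'+1) : ℝ) * Real.exp lam * (Cn * Real.exp A')
            + (↑(n + k - σ') : ℝ) * (Cn * Real.exp A)
            ≤ (↑(n+1) : ℝ) * ((((n + 1 + k).choose (n + 1) : ℕ) : ℝ) * E) := by
          have e4 : (↑(σ'+1) : ℝ) * Real.exp lam * (Cn * Real.exp A')
              + (↑(n + k - σ') : ℝ) * (Cn * Real.exp A)
              = Cn * Real.exp A * (((σ' : ℝ) + 1) * Real.exp x + (((n : ℝ) + k) - σ')) := by
            rw [hcast]
            push_cast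
            linear_combination ((σ' : ℝ) + 1) * Cn * hexp
          rw [e4]
          have hCnpos : (0:ℝ) ≤ Cn := Nat.cast_nonneg _
          have step3 : Cn * Real.exp A * (((σ' : ℝ) + 1) * Real.exp x + (((n : ℝ) + k) - σ'))
              ≤ Cn * Real.exp A * (((n : ℝ) + 1 + k) * Real.exp (p * x + x ^ 2 / 8)) := by
            apply mul_le_mul_of_nonneg_left hoe'
            positivity
          have e5 : Cn * Real.exp A * (((n : ℝ) + 1 + k) * Real.exp (p * x + x ^ 2 / 8))
              = (↑(n+1) : ℝ) * ((((n + 1 + k).choose (n + 1) : ℕ) : ℝ) * E) := by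
            have cid2 := choose_id_real (n + 1 + k) n
            have e6 : n + 1 + k - 1 = n + k := by omega
            rw [e6] at cid2
            have hexp2 : Real.exp A * Real.exp (p * x + x ^ 2 / 8) = E := by
              rw [hE, ← Real.exp_add, hA, hp, hx, serflingC_succ, ← hc']
              congr 1
              push_cast
              field_simp
              ring
            have hcast2 : ((n + 1 + k : ℕ) : ℝ) = (n : ℝ) + 1 + k := by push_cast; ring
            rw [hcast2] at cid2
            push_cast at cid2 ⊢
            linear_combination ((n : ℝ) + 1 + (k : ℝ)) * Cn * hexp2 - E * cid2
          linarith
        -- conclude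
        have final : (↑(n+1) : ℝ) * ∑ j ∈ Finset.range (n + 1 + 1),
            ((σ'+1).choose j : ℝ) * (((n + 1 + k - (σ'+1)).choose (n + 1 - j) : ℕ) : ℝ)
              * Real.exp (lam * j)
            ≤ (↑(n+1) : ℝ) * ((((n + 1 + k).choose (n + 1) : ℕ) : ℝ) * E) := by
          rw [hid]
          linarith
        exact le_of_mul_le_mul_left final hn1
lemma serflingC_le (k : ℕ) (hk : 1 ≤ k) (n : ℕ) :
    serflingC k n ≤ (n : ℝ) * ((k : ℝ) + 1) / ((n : ℝ) + k) := by
  induction n with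
  | zero => simp [serflingC]
  | succ n ih =>
    rw [serflingC_succ]
    have hk' : (1 : ℝ) ≤ (k : ℝ) := by exact_mod_cast hk
    have hn' : (0 : ℝ) ≤ (n : ℝ) := Nat.cast_nonneg n
    have h1 : (0:ℝ) < (n:ℝ) + k := by linarith
    have h2 : (0:ℝ) < (n:ℝ) + 1 + k := by linarith
    have key : ((k:ℝ) / ((k:ℝ) + n)) ^ 2
        ≤ ((n:ℝ) + 1) * ((k:ℝ) + 1) / ((n:ℝ) + 1 + k) - (n:ℝ) * ((k:ℝ) + 1) / ((n:ℝ) + k) := by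
      have e : ((n:ℝ) + 1) * ((k:ℝ) + 1) / ((n:ℝ) + 1 + k) - (n:ℝ) * ((k:ℝ) + 1) / ((n:ℝ) + k)
          = (k:ℝ) * ((k:ℝ) + 1) / (((n:ℝ) + k) * ((n:ℝ) + 1 + k)) := by
        field_simp
        ring
      rw [e, div_pow, div_le_div_iff₀ (by positivity) (by positivity)]
      nlinarith [mul_nonneg (mul_nonneg (by linarith : (0:ℝ) ≤ (k:ℝ)) h1.le) hn']
    have ecast : (((n:ℕ) + 1 : ℕ) : ℝ) = (n : ℝ) + 1 := by push_cast; ring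
    rw [ecast]
    linarith


set_option maxHeartbeats 1000000 in
/-- Serfling's bound for hypergeometric tails. -/
theorem stmt_14 (n k : ℕ) (hn : 1 ≤ n) (hk : 1 ≤ k) (l : ℕ) (hl : l = n + k)
    (σ : ℕ) (hσ : σ ≤ l) (μ : ℝ) (hμ : 0 < μ)
    (d : ℕ) (hd : d = ⌈(n : ℝ) * ((σ : ℝ) / l + ((k : ℝ) / l) * μ)⌉₊) :
    ∑ j ∈ Finset.Icc d n,
        (σ.choose j : ℝ) * ((l - σ).choose (n - j) : ℝ) / (l.choose n : ℝ)
      ≤ Real.exp (-2 * ((k : ℝ) * n / l) * ((k : ℝ) / (k + 1)) * μ ^ 2) := by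
  subst hl
  have hσ' : σ ≤ n + k := hσ
  have hnR : (1:ℝ) ≤ (n:ℝ) := by exact_mod_cast hn
  have hkR : (1:ℝ) ≤ (k:ℝ) := by exact_mod_cast hk
  have hlR : (0:ℝ) < (n:ℝ) + k := by linarith
  have hlR' : ((n:ℝ) + k) ≠ 0 := ne_of_gt hlR
  have hcast : ((n + k : ℕ) : ℝ) = (n : ℝ) + k := by push_cast; ring
  set c : ℝ := serflingC k n with hc
  clear_value c
  have hc_pos : 0 < c := by
    rw [hc]
    have h1 : ((k:ℝ) / ((k:ℝ) + ((0:ℕ):ℝ))) ^ 2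
        ≤ ∑ i ∈ Finset.range n, ((k : ℝ) / (k + i)) ^ 2 :=
      Finset.single_le_sum (f := fun i : ℕ => ((k : ℝ) / (k + i)) ^ 2)
        (fun i _ => sq_nonneg _) (Finset.mem_range.mpr hn)
    have h2 : ((k:ℝ) / ((k:ℝ) + ((0:ℕ):ℝ))) ^ 2 = 1 := by
      rw [Nat.cast_zero, add_zero, div_self (by linarith)]
      norm_num
    rw [h2] at h1
    show (0:ℝ) < ∑ i ∈ Finset.range n, ((k : ℝ) / (k + i)) ^ 2
    linarith
  have hc_le : c ≤ (n : ℝ) * ((k : ℝ) + 1) / ((n : ℝ) + k) := by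
    rw [hc]; exact serflingC_le k hk n
  have hdge : (n : ℝ) * ((σ : ℝ) / ((n:ℝ) + k) + ((k : ℝ) / ((n:ℝ) + k)) * μ) ≤ (d : ℝ) := by
    have h := Nat.le_ceil ((n : ℝ) * ((σ : ℝ) / ((n + k : ℕ) : ℝ)
      + ((k : ℝ) / ((n + k : ℕ) : ℝ)) * μ))
    rw [← hd] at h
    rw [hcast] at h
    exact h
  set t : ℝ := (d : ℝ) - (n : ℝ) * σ / ((n:ℝ) + k) with ht
  clear_value t
  have ht_ge : (n : ℝ) * k * μ / ((n:ℝ) + k) ≤ t := by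
    rw [ht]
    have e : (n : ℝ) * ((σ : ℝ) / ((n:ℝ) + k) + ((k : ℝ) / ((n:ℝ) + k)) * μ)
        = (n : ℝ) * σ / ((n:ℝ) + k) + (n : ℝ) * k * μ / ((n:ℝ) + k) := by
      ring
    rw [e] at hdge
    linarith
  have ht_pos : 0 < t := by
    have h0 : 0 < (n : ℝ) * k * μ / ((n:ℝ) + k) := by positivity
    linarith
  set lam : ℝ := 4 * t / c with hlam
  clear_value lam
  have hlam0 : 0 ≤ lam := by
    rw [hlam]
    positivity
  have hCpos : (0:ℝ) < (((n + k).choose n : ℕ) : ℝ) := by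
    exact_mod_cast Nat.choose_pos (Nat.le_add_right n k)
  have hCne : (((n + k).choose n : ℕ) : ℝ) ≠ 0 := ne_of_gt hCpos
  have hmgf := mgf_bound k hk n σ hσ' lam
  rw [← hc] at hmgf
  have hsub : Finset.Icc d n ⊆ Finset.range (n + 1) := by
    intro j hj
    rw [Finset.mem_range]
    have := (Finset.mem_Icc.mp hj).2
    omega
  have hsum1 : ∑ j ∈ Finset.Icc d n,
      (σ.choose j : ℝ) * (((n + k - σ).choose (n - j) : ℕ) : ℝ) * Real.exp (lam * j)
      ≤ ∑ j ∈ Finset.range (n + 1),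
      (σ.choose j : ℝ) * (((n + k - σ).choose (n - j) : ℕ) : ℝ) * Real.exp (lam * j) := by
    apply Finset.sum_le_sum_of_subset_of_nonneg hsub
    intro j _ _
    positivity
  have habs : ∀ (u v C : ℝ), C ≠ 0 → u / C * (C * v) = u * v := by
    intro u v C hC
    field_simp
  calc ∑ j ∈ Finset.Icc d n,
        (σ.choose j : ℝ) * ((n + k - σ).choose (n - j) : ℝ) / (((n + k).choose n : ℕ) : ℝ)
      ≤ ∑ j ∈ Finset.Icc d n,
        Real.exp (-(lam * d)) / (((n + k).choose n : ℕ) : ℝ)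
          * ((σ.choose j : ℝ) * (((n + k - σ).choose (n - j) : ℕ) : ℝ) * Real.exp (lam * j)) := by
        apply Finset.sum_le_sum
        intro j hj
        have hjd : (d : ℝ) ≤ (j : ℝ) := by
          exact_mod_cast (Finset.mem_Icc.mp hj).1
        have h1 : (1:ℝ) ≤ Real.exp (-(lam * d)) * Real.exp (lam * j) := by
          rw [← Real.exp_add]
          apply Real.one_le_exp
          nlinarith
        have h4 : (σ.choose j : ℝ) * (((n + k - σ).choose (n - j) : ℕ) : ℝ)
            ≤ (σ.choose j : ℝ) * (((n + k - σ).choose (n - j) : ℕ) : ℝ)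
              * (Real.exp (-(lam * d)) * Real.exp (lam * j)) :=
          le_mul_of_one_le_right (by positivity) h1
        have h6 : Real.exp (-(lam * (d:ℝ))) / (((n + k).choose n : ℕ) : ℝ)
            * ((σ.choose j : ℝ) * (((n + k - σ).choose (n - j) : ℕ) : ℝ) * Real.exp (lam * j))
            = (σ.choose j : ℝ) * (((n + k - σ).choose (n - j) : ℕ) : ℝ)
              * (Real.exp (-(lam * (d:ℝ))) * Real.exp (lam * j)) / (((n + k).choose n : ℕ) : ℝ) := by
          ring
        rw [h6]
        exact div_le_div_of_nonneg_right h4 hCpos.le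
    _ = Real.exp (-(lam * d)) / (((n + k).choose n : ℕ) : ℝ)
          * ∑ j ∈ Finset.Icc d n,
            (σ.choose j : ℝ) * (((n + k - σ).choose (n - j) : ℕ) : ℝ) * Real.exp (lam * j) := by
        rw [Finset.mul_sum]
    _ ≤ Real.exp (-(lam * d)) / (((n + k).choose n : ℕ) : ℝ)
          * ∑ j ∈ Finset.range (n + 1),
            (σ.choose j : ℝ) * (((n + k - σ).choose (n - j) : ℕ) : ℝ) * Real.exp (lam * j) := by
        apply mul_le_mul_of_nonneg_left hsum1
        positivity
    _ ≤ Real.exp (-(lam * d)) / (((n + k).choose n : ℕ) : ℝ)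
          * ((((n + k).choose n : ℕ) : ℝ)
            * Real.exp (lam * n * σ / ((n:ℝ) + k) + lam ^ 2 * c / 8)) := by
        apply mul_le_mul_of_nonneg_left hmgf
        positivity
    _ = Real.exp (-(lam * d) + (lam * n * σ / ((n:ℝ) + k) + lam ^ 2 * c / 8)) := by
        rw [Real.exp_add (-(lam * (d:ℝ))) (lam * ↑n * ↑σ / ((n:ℝ) + ↑k) + lam ^ 2 * c / 8)]
        exact habs _ _ _ hCne
    _ ≤ Real.exp (-2 * ((k : ℝ) * n / ((n + k : ℕ) : ℝ)) * ((k : ℝ) / (k + 1)) * μ ^ 2) := by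
        apply Real.exp_le_exp.mpr
        have e1 : -(lam * d) + (lam * n * σ / ((n:ℝ) + k) + lam ^ 2 * c / 8)
            = -2 * (t ^ 2 / c) := by
          rw [hlam, ht]
          field_simp
          ring
        rw [e1, hcast]
        have key : ((k : ℝ) * n / ((n:ℝ) + k)) * ((k : ℝ) / (k + 1)) * μ ^ 2 ≤ t ^ 2 / c := by
          have e2 : ((k : ℝ) * n / ((n:ℝ) + k)) * ((k : ℝ) / (k + 1)) * μ ^ 2
              = ((n : ℝ) * k * μ / ((n:ℝ) + k)) ^ 2
                / ((n : ℝ) * ((k : ℝ) + 1) / ((n : ℝ) + k)) := by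
            field_simp
          rw [e2]
          apply div_le_div₀ (sq_nonneg t) ?_ hc_pos hc_le
          have h0 : 0 ≤ (n : ℝ) * k * μ / ((n:ℝ) + k) := by positivity
          exact pow_le_pow_left₀ h0 ht_ge 2
        nlinarith [key]
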